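/- Let (g, J, ω) be a Kähler Lie algebra with associated metric g(x,y) = ω(Jx,y) and Levi-Civita connection ∇, and let h be an ω-lagrangian ideal of g with J(h) = h. Then ∇_z y ∈ h for all y ∈ h and all z ∈ g, and ∇_x y = 0 for all x, y ∈ h. In particular g is a Walker metric: h is a subspace with g(h,h) = 0 that is parallel, i.e. ∇_z h ⊆ h for all z ∈ g. -/

import Mathlib

section KahlerDefs

variable {L : Type*} [LieRing L] [LieAlgebra ℝ L]

def IsComplexStructure (J : Module.End ℝ L) : Prop :=
  (∀ x, J (J x) = -x) ∧
  ∀ x y : L, ⁅J x, J y⁆ - ⁅x, y⁆ - J ⁅J x, y⁆ - J ⁅x, J y⁆ = 0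

def IsSymplecticForm (ω : L →ₗ[ℝ] L →ₗ[ℝ] ℝ) : Prop :=
  (∀ x, ω x x = 0) ∧
  (∀ x, (∀ y, ω x y = 0) → x = 0) ∧
  ∀ x y z : L, ω ⁅x, y⁆ z + ω ⁅y, z⁆ x + ω ⁅z, x⁆ y = 0

def IsKahlerStructure (J : Module.End ℝ L) (ω : L →ₗ[ℝ] L →ₗ[ℝ] ℝ) : Prop :=
  IsComplexStructure J ∧ IsSymplecticForm ω ∧ ∀ x y : L, ω (J x) (J y) = ω x y

def IsLeviCivita (J : Module.End ℝ L) (ω : L →ₗ[ℝ] L →ₗ[ℝ] ℝ)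
    (D : L →ₗ[ℝ] L →ₗ[ℝ] L) : Prop :=
  ∀ x y z : L,
    2 * ω (J (D x y)) z = ω (J ⁅x, y⁆) z - ω (J ⁅y, z⁆) x + ω (J ⁅z, x⁆) y

noncomputable def ricci (D : L →ₗ[ℝ] L →ₗ[ℝ] L) (x y : L) : ℝ :=
  - LinearMap.trace ℝ L
      ((D x) ∘ₗ (D.flip y) - D.flip (D x y) - (D.flip y) ∘ₗ (LieAlgebra.ad ℝ L x))

def IsFlat (D : L →ₗ[ℝ] L →ₗ[ℝ] L) : Prop :=
  ∀ x y z : L, D x (D y z) - D y (D x z) - D ⁅x, y⁆ z = 0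

end KahlerDefs

section Models

variable (M : Type*) [LieRing M] [LieAlgebra ℝ M]

def IsRxH3 : Prop :=
  ∃ b : Module.Basis (Fin 4) ℝ M,
    ⁅b 0, b 1⁆ = b 2 ∧ ⁅b 0, b 2⁆ = 0 ∧ ⁅b 0, b 3⁆ = 0 ∧
    ⁅b 1, b 2⁆ = 0 ∧ ⁅b 1, b 3⁆ = 0 ∧ ⁅b 2, b 3⁆ = 0

def IsR2xAffR : Prop :=
  ∃ b : Module.Basis (Fin 4) ℝ M,
    ⁅b 0, b 1⁆ = b 1 ∧ ⁅b 0, b 2⁆ = 0 ∧ ⁅b 0, b 3⁆ = 0 ∧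
    ⁅b 1, b 2⁆ = 0 ∧ ⁅b 1, b 3⁆ = 0 ∧ ⁅b 2, b 3⁆ = 0

def IsRxE2 : Prop :=
  ∃ b : Module.Basis (Fin 4) ℝ M,
    ⁅b 0, b 1⁆ = -b 2 ∧ ⁅b 0, b 2⁆ = b 1 ∧ ⁅b 0, b 3⁆ = 0 ∧
    ⁅b 1, b 2⁆ = 0 ∧ ⁅b 1, b 3⁆ = 0 ∧ ⁅b 2, b 3⁆ = 0

def IsAffRxAffR : Prop :=
  ∃ b : Module.Basis (Fin 4) ℝ M,
    ⁅b 0, b 1⁆ = b 1 ∧ ⁅b 0, b 2⁆ = 0 ∧ ⁅b 0, b 3⁆ = 0 ∧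
    ⁅b 1, b 2⁆ = 0 ∧ ⁅b 1, b 3⁆ = 0 ∧ ⁅b 2, b 3⁆ = b 3

def IsAffC : Prop :=
  ∃ b : Module.Basis (Fin 4) ℝ M,
    ⁅b 0, b 1⁆ = 0 ∧ ⁅b 0, b 2⁆ = b 2 ∧ ⁅b 0, b 3⁆ = b 3 ∧
    ⁅b 1, b 2⁆ = b 3 ∧ ⁅b 1, b 3⁆ = -b 2 ∧ ⁅b 2, b 3⁆ = 0

def IsR4m1m1 : Prop :=
  ∃ b : Module.Basis (Fin 4) ℝ M,
    ⁅b 3, b 0⁆ = b 0 ∧ ⁅b 3, b 1⁆ = -b 1 ∧ ⁅b 3, b 2⁆ = -b 2 ∧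
    ⁅b 0, b 1⁆ = 0 ∧ ⁅b 0, b 2⁆ = 0 ∧ ⁅b 1, b 2⁆ = 0

def IsR4'0 (δ : ℝ) : Prop :=
  ∃ b : Module.Basis (Fin 4) ℝ M,
    ⁅b 3, b 0⁆ = b 0 ∧ ⁅b 3, b 1⁆ = -(δ • b 2) ∧ ⁅b 3, b 2⁆ = δ • b 1 ∧
    ⁅b 0, b 1⁆ = 0 ∧ ⁅b 0, b 2⁆ = 0 ∧ ⁅b 1, b 2⁆ = 0

def IsD4 (lam : ℝ) : Prop :=
  ∃ b : Module.Basis (Fin 4) ℝ M,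
    ⁅b 0, b 1⁆ = b 2 ∧ ⁅b 3, b 0⁆ = lam • b 0 ∧ ⁅b 3, b 1⁆ = (1 - lam) • b 1 ∧
    ⁅b 3, b 2⁆ = b 2 ∧ ⁅b 0, b 2⁆ = 0 ∧ ⁅b 1, b 2⁆ = 0

def IsD4' (δ : ℝ) : Prop :=
  ∃ b : Module.Basis (Fin 4) ℝ M,
    ⁅b 0, b 1⁆ = b 2 ∧ ⁅b 3, b 0⁆ = (δ / 2) • b 0 - b 1 ∧
    ⁅b 3, b 1⁆ = b 0 + (δ / 2) • b 1 ∧ ⁅b 3, b 2⁆ = δ • b 2 ∧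
    ⁅b 0, b 2⁆ = 0 ∧ ⁅b 1, b 2⁆ = 0

end Models

/-- For a Kähler Lie algebra with ω-lagrangian ideal h satisfying J(h) = h,
the Levi-Civita connection satisfies ∇_z y ∈ h for y ∈ h, ∇_x y = 0 for x,y ∈ h, and the
metric g(x,y) = ω(Jx,y) is null on h; hence g is a Walker metric with parallel null
subspace h. -/
theorem J_invariant_lagrangian_ideal_walker
    {L : Type*} [LieRing L] [LieAlgebra ℝ L] [Module.Finite ℝ L]
    (J : Module.End ℝ L) (ω : L →ₗ[ℝ] L →ₗ[ℝ] ℝ)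
    (hK : IsKahlerStructure J ω)
    (D : L →ₗ[ℝ] L →ₗ[ℝ] L) (hD : IsLeviCivita J ω D)
    (h : Submodule ℝ L) (hideal : ∀ x : L, ∀ y ∈ h, ⁅x, y⁆ ∈ h)
    (hiso : ∀ x ∈ h, ∀ y ∈ h, ω x y = 0)
    (hlag : ∀ y : L, (∀ x ∈ h, ω x y = 0) → y ∈ h)
    (hJh : Submodule.map J h = h) :
    (∀ z : L, ∀ y ∈ h, D z y ∈ h) ∧
    (∀ x ∈ h, ∀ y ∈ h, D x y = 0) ∧
    (∀ x ∈ h, ∀ y ∈ h, ω (J x) y = 0) := by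
  obtain ⟨⟨hJ2, _⟩, ⟨halt, hnd, hcocy⟩, hcompat⟩ := hK
  -- ω is antisymmetric
  have hskew : ∀ x y : L, ω x y = -ω y x := by
    intro x y
    have h1 := halt (x + y)
    have h2 := halt x
    have h3 := halt y
    simp only [map_add, LinearMap.add_apply] at h1
    linarith
  -- J maps h into h
  have hJmem : ∀ y ∈ h, J y ∈ h := by
    intro y hy
    rw [← hJh]
    exact Submodule.mem_map_of_mem hy
  -- brackets with one argument in h land in h (either side)
  have hid' : ∀ y ∈ h, ∀ z : L, ⁅y, z⁆ ∈ h := by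
    intro y hy z
    have := Submodule.neg_mem h (hideal z y hy)
    rwa [lie_skew] at this
  -- h is abelian
  have habel : ∀ x ∈ h, ∀ y ∈ h, ⁅x, y⁆ = (0 : L) := by
    intro x hx y hy
    apply hnd
    intro z
    have hc := hcocy x y z
    have h1 : ω ⁅y, z⁆ x = 0 := hiso _ (hid' y hy z) _ hx
    have h2 : ω ⁅z, x⁆ y = 0 := hiso _ (hideal z x hx) _ hy
    linarith
  -- the parallel statement
  have hpar : ∀ z : L, ∀ y ∈ h, D z y ∈ h := by
    intro z y hy
    apply hlag
    intro x hx
    set x' : L := -(J x) with hx'def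
    have hx'mem : x' ∈ h := Submodule.neg_mem h (hJmem x hx)
    have hxJ : J x' = x := by simp [hx'def, hJ2 x]
    have hko := hD z y x'
    have t1 : ω (J ⁅z, y⁆) x' = 0 := hiso _ (hJmem _ (hideal z y hy)) _ hx'mem
    have t2 : ω (J ⁅y, x'⁆) z = 0 := by rw [habel y hy x' hx'mem]; simp
    have t3 : ω (J ⁅x', z⁆) y = 0 := hiso _ (hJmem _ (hid' x' hx'mem z)) _ hy
    have hz : ω (J (D z y)) x' = 0 := by linarith
    have key : ω x (D z y) = ω (J (D z y)) x' := by
      have h1 : ω (J (D z y)) x' = ω (J (J (D z y))) (J x') := (hcompat _ _).symm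
      rw [hJ2, hxJ] at h1
      have h2 : ω (-(D z y)) x = -ω (D z y) x := by simp
      have h3 := hskew x (D z y)
      linarith
    rw [key, hz]
  refine ⟨hpar, ?_, ?_⟩
  · intro x hx y hy
    have hz : ∀ z : L, ω (J (D x y)) z = 0 := by
      intro z
      have hko := hD x y z
      have t1 : ω (J ⁅x, y⁆) z = 0 := by rw [habel x hx y hy]; simp
      have t2 : ω (J ⁅y, z⁆) x = 0 := hiso _ (hJmem _ (hid' y hy z)) _ hx
      have t3 : ω (J ⁅z, x⁆) y = 0 := hiso _ (hJmem _ (hideal z x hx)) _ hy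
      linarith
    have h0 : J (D x y) = 0 := hnd _ hz
    have h1 := congrArg J h0
    rw [hJ2] at h1
    simpa using h1.symm
  · intro x hx y hy
    exact hiso _ (hJmem x hx) _ hy
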